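/- Fix integers K, N, a, b with m = a*N − b*K > 0. For any σ₁, σ₂ ∈ DPT(K,N,a,b) there exists a unique m-affine permutation f : ℤ → ℤ such that σ₂(x,y) = f(σ₁(x,y)) for all (x,y) ∈ ℤ². -/

import Mathlib

/-- A standard doubly periodic tableau with respect to `(K, N, a, b)`. -/
def IsDPT (K N a b : ℤ) (σ : ℤ × ℤ → ℤ) : Prop :=
  Function.Surjective σ ∧
  (∀ x y : ℤ, σ (x + K, y - N) = σ (x, y)) ∧
  (∀ x y : ℤ, σ (x + a, y - b) = σ (x, y) + (a * N - b * K)) ∧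
  (∀ x y : ℤ, σ (x, y) < σ (x + 1, y)) ∧
  (∀ x y : ℤ, σ (x, y) < σ (x, y + 1))

lemma dpt_shiftK {K N : ℤ} {σ : ℤ × ℤ → ℤ}
    (h : ∀ x y : ℤ, σ (x + K, y - N) = σ (x, y)) (s x y : ℤ) :
    σ (x + s * K, y - s * N) = σ (x, y) := by
  induction s using Int.induction_on with
  | zero => simp
  | succ n ih =>
    have h1 : x + ((n : ℤ) + 1) * K = (x + (n : ℤ) * K) + K := by ring
    have h2 : y - ((n : ℤ) + 1) * N = (y - (n : ℤ) * N) - N := by ring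
    rw [h1, h2, h, ih]
  | pred n ih =>
    have h1 : x + (-(n : ℤ)) * K = (x + (-(n : ℤ) - 1) * K) + K := by ring
    have h2 : y - (-(n : ℤ)) * N = (y - (-(n : ℤ) - 1) * N) - N := by ring
    rw [h1, h2, h] at ih
    exact ih

lemma dpt_shiftA {K N a b : ℤ} {σ : ℤ × ℤ → ℤ}
    (h : ∀ x y : ℤ, σ (x + a, y - b) = σ (x, y) + (a * N - b * K)) (t x y : ℤ) :
    σ (x + t * a, y - t * b) = σ (x, y) + t * (a * N - b * K) := by
  induction t using Int.induction_on with
  | zero => simp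
  | succ n ih =>
    have h1 : x + ((n : ℤ) + 1) * a = (x + (n : ℤ) * a) + a := by ring
    have h2 : y - ((n : ℤ) + 1) * b = (y - (n : ℤ) * b) - b := by ring
    rw [h1, h2, h, ih]; ring
  | pred n ih =>
    have h1 : x + (-(n : ℤ)) * a = (x + (-(n : ℤ) - 1) * a) + a := by ring
    have h2 : y - (-(n : ℤ)) * b = (y - (-(n : ℤ) - 1) * b) - b := by ring
    rw [h1, h2, h] at ih
    linarith

lemma dpt_shiftComb {K N a b : ℤ} {σ : ℤ × ℤ → ℤ}
    (hK : ∀ x y : ℤ, σ (x + K, y - N) = σ (x, y))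
    (hA : ∀ x y : ℤ, σ (x + a, y - b) = σ (x, y) + (a * N - b * K)) (s t x y : ℤ) :
    σ (x + s * K + t * a, y - s * N - t * b) = σ (x, y) + t * (a * N - b * K) := by
  have h := dpt_shiftA (K := K) (N := N) hA t (x + s * K) (y - s * N)
  rw [dpt_shiftK hK s x y] at h
  exact h

/-- Key structural lemma: for a surjective doubly periodic function, equal values
imply the two points differ by an integer multiple of `(K, -N)`. -/
lemma dpt_fiber {K N a b : ℤ} (hm : 0 < a * N - b * K) {σ : ℤ × ℤ → ℤ}
    (hsurj : Function.Surjective σ)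
    (hK : ∀ x y : ℤ, σ (x + K, y - N) = σ (x, y))
    (hA : ∀ x y : ℤ, σ (x + a, y - b) = σ (x, y) + (a * N - b * K)) :
    ∀ p q : ℤ × ℤ, σ p = σ q → ∃ s : ℤ, q.1 = p.1 + s * K ∧ q.2 = p.2 - s * N := by
  set m : ℤ := a * N - b * K with hm_def
  -- d = gcd of N and b
  set d : ℤ := (Int.gcd N b : ℤ) with hd_def
  have hd0 : 0 < d := by
    rcases Nat.eq_zero_or_pos (Int.gcd N b) with h0 | h0
    · exfalso
      have hN : N = 0 := (Int.gcd_eq_zero_iff.mp h0).1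
      have hb : b = 0 := (Int.gcd_eq_zero_iff.mp h0).2
      rw [hN, hb] at hm_def
      simp at hm_def
      omega
    · rw [hd_def]; exact_mod_cast h0
  obtain ⟨c₁, hc₁⟩ : d ∣ N := Int.gcd_dvd_left N b
  obtain ⟨c₂, hc₂⟩ : d ∣ b := Int.gcd_dvd_right N b
  set s₀ : ℤ := Int.gcdA N b with hs₀
  set t₀ : ℤ := Int.gcdB N b with ht₀
  have hbez : d = N * s₀ + b * t₀ := Int.gcd_eq_gcd_ab N b
  set u : ℤ := s₀ * K + t₀ * a with hu
  set e : ℤ := c₁ * a - c₂ * K with he_def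
  have he : d * e = m := by
    rw [he_def, hm_def]
    linear_combination K * hc₂ - a * hc₁
  have he0 : 0 < e := by nlinarith
  -- natural number versions
  set d' : ℕ := d.toNat with hd'
  set e' : ℕ := e.toNat with he'
  set m' : ℕ := m.toNat with hm'
  have hdc : (d' : ℤ) = d := Int.toNat_of_nonneg hd0.le
  have hec : (e' : ℤ) = e := Int.toNat_of_nonneg he0.le
  have hmc : (m' : ℤ) = m := Int.toNat_of_nonneg hm.le
  haveI : NeZero d' := ⟨by omega⟩
  haveI : NeZero e' := ⟨by omega⟩
  haveI : NeZero m' := ⟨by omega⟩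
  -- the reduction map
  set h : ℤ × ℤ → ZMod e' × ZMod d' :=
    fun p => (((p.1 + (p.2 / d) * u : ℤ) : ZMod e'), ((p.2 : ℤ) : ZMod d')) with hh
  -- equal h-values means difference in the lattice
  have h_coset : ∀ p q : ℤ × ℤ, h p = h q →
      ∃ s t : ℤ, q.1 = p.1 + s * K + t * a ∧ q.2 = p.2 - s * N - t * b := by
    intro p q hpq
    rw [Prod.ext_iff] at hpq
    obtain ⟨hpq1, hpq2⟩ := hpq
    have hd2 : (d : ℤ) ∣ q.2 - p.2 := by
      have := (ZMod.intCast_eq_intCast_iff _ _ _).mp hpq2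
      have := Int.ModEq.dvd this
      rwa [hdc] at this
    obtain ⟨w, hw⟩ := hd2
    have hq2 : q.2 = p.2 + w * d := by linarith
    have hdiv : q.2 / d = p.2 / d + w := by
      rw [hq2, Int.add_mul_ediv_right _ _ hd0.ne']
    have he2 : (e : ℤ) ∣ (q.1 + (q.2 / d) * u) - (p.1 + (p.2 / d) * u) := by
      have := (ZMod.intCast_eq_intCast_iff _ _ _).mp hpq1
      have := Int.ModEq.dvd this
      rwa [hec] at this
    obtain ⟨k, hk⟩ := he2
    refine ⟨-w * s₀ - k * c₂, -w * t₀ + k * c₁, ?_, ?_⟩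
    · -- q.1 = p.1 + s*K + t*a
      have hk' : q.1 - p.1 = -(w * u) + e * k := by
        linear_combination hk - u * hdiv
      rw [hu, he_def] at hk'
      linear_combination hk'
    · -- q.2 = p.2 - s*N - t*b
      have : (-w * s₀ - k * c₂) * N + (-w * t₀ + k * c₁) * b = -(w * d) := by
        linear_combination w * hbez - (k * c₂) * hc₁ + (k * c₁) * hc₂
      linarith [this, hq2]
  -- h-equality implies equal σ mod m
  have h_inv : ∀ p q : ℤ × ℤ, h p = h q → ((σ q : ℤ) : ZMod m') = ((σ p : ℤ) : ZMod m') := by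
    intro p q hpq
    obtain ⟨s, t, h1, h2⟩ := h_coset p q hpq
    have hq : q = (p.1 + s * K + t * a, p.2 - s * N - t * b) := Prod.ext h1 h2
    have := dpt_shiftComb hK hA s t p.1 p.2
    rw [← hm_def] at this
    rw [hq, this]
    push_cast
    have hz : ((m : ℤ) : ZMod m') = 0 := by
      rw [← hmc]
      exact_mod_cast ZMod.natCast_self m'
    rw [hz]
    ring
  -- h is surjective
  have h_surj : Function.Surjective h := by
    rintro ⟨z₁, z₂⟩
    obtain ⟨y, hy⟩ := ZMod.intCast_surjective z₂
    obtain ⟨z, hz⟩ := ZMod.intCast_surjective z₁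
    refine ⟨(z - (y / d) * u, y), ?_⟩
    rw [hh]
    simp only [Prod.mk.injEq]
    constructor
    · rw [show z - y / d * u + y / d * u = z by ring]; exact hz
    · exact hy
  -- the induced map on quotients
  set τ : ZMod e' × ZMod d' → ZMod m' :=
    fun c => ((σ (Function.surjInv h_surj c) : ℤ) : ZMod m') with hτ
  have τ_spec : ∀ p : ℤ × ℤ, τ (h p) = ((σ p : ℤ) : ZMod m') := by
    intro p
    exact h_inv p _ (Function.surjInv_eq h_surj (h p)).symm
  have τ_surj : Function.Surjective τ := by
    intro c
    obtain ⟨i, hi⟩ := ZMod.intCast_surjective c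
    obtain ⟨p, hp⟩ := hsurj i
    exact ⟨h p, by rw [τ_spec, hp, hi]⟩
  have card_eq : Fintype.card (ZMod e' × ZMod d') = Fintype.card (ZMod m') := by
    rw [Fintype.card_prod, ZMod.card, ZMod.card, ZMod.card]
    have hcast : ((e' * d' : ℕ) : ℤ) = ((m' : ℕ) : ℤ) := by
      push_cast
      rw [hdc, hec, hmc]
      linear_combination he
    exact_mod_cast hcast
  have τ_bij : Function.Bijective τ :=
    (Fintype.bijective_iff_surjective_and_card τ).mpr ⟨τ_surj, card_eq⟩
  -- final argument
  intro p q hσ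
  have hcast : ((σ p : ℤ) : ZMod m') = ((σ q : ℤ) : ZMod m') := by rw [hσ]
  have hhpq : h p = h q := by
    apply τ_bij.injective
    rw [τ_spec, τ_spec, hcast]
  obtain ⟨s, t, h1, h2⟩ := h_coset p q hhpq
  have hq : q = (p.1 + s * K + t * a, p.2 - s * N - t * b) := Prod.ext h1 h2
  have hσq : σ q = σ p + t * m := by
    rw [hq]
    have := dpt_shiftComb hK hA s t p.1 p.2
    rw [← hm_def] at this
    simp [this]
  have ht0 : t = 0 := by
    have ht : t * m = 0 := by linarith
    rcases mul_eq_zero.mp ht with h | h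
    · exact h
    · exact absurd h hm.ne'
  subst ht0
  exact ⟨s, by linarith [h1], by linarith [h2]⟩

theorem dpt_transitive_affine_perm (K N a b : ℤ) (hm : 0 < a * N - b * K)
    (σ₁ σ₂ : ℤ × ℤ → ℤ) (h₁ : IsDPT K N a b σ₁) (h₂ : IsDPT K N a b σ₂) :
    ∃! f : ℤ → ℤ, Function.Bijective f ∧
      (∀ i : ℤ, f (i + (a * N - b * K)) = f i + (a * N - b * K)) ∧
      ∀ x y : ℤ, σ₂ (x, y) = f (σ₁ (x, y)) := by
  obtain ⟨h₁s, h₁K, h₁A, -, -⟩ := h₁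
  obtain ⟨h₂s, h₂K, h₂A, -, -⟩ := h₂
  have fib₁ := dpt_fiber hm h₁s h₁K h₁A
  have fib₂ := dpt_fiber hm h₂s h₂K h₂A
  -- transfer lemmas
  have tr₁₂ : ∀ p q : ℤ × ℤ, σ₁ p = σ₁ q → σ₂ p = σ₂ q := by
    intro p q hpq
    obtain ⟨s, hq1, hq2⟩ := fib₁ p q hpq
    have hq : q = (p.1 + s * K, p.2 - s * N) := Prod.ext hq1 hq2
    rw [hq, dpt_shiftK h₂K s p.1 p.2]
  have tr₂₁ : ∀ p q : ℤ × ℤ, σ₂ p = σ₂ q → σ₁ p = σ₁ q := by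
    intro p q hpq
    obtain ⟨s, hq1, hq2⟩ := fib₂ p q hpq
    have hq : q = (p.1 + s * K, p.2 - s * N) := Prod.ext hq1 hq2
    rw [hq, dpt_shiftK h₁K s p.1 p.2]
  set f : ℤ → ℤ := fun i => σ₂ (Function.surjInv h₁s i) with hf_def
  have hf : ∀ p : ℤ × ℤ, f (σ₁ p) = σ₂ p := by
    intro p
    exact tr₁₂ _ p (Function.surjInv_eq h₁s (σ₁ p))
  have hfval : ∀ i : ℤ, σ₁ (Function.surjInv h₁s i) = i := Function.surjInv_eq h₁s
  refine ⟨f, ⟨⟨?_, ?_⟩, ?_, ?_⟩, ?_⟩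
  · -- injective
    intro i j hij
    have := tr₂₁ (Function.surjInv h₁s i) (Function.surjInv h₁s j) hij
    rw [hfval, hfval] at this
    exact this
  · -- surjective
    intro k
    obtain ⟨p, hp⟩ := h₂s k
    exact ⟨σ₁ p, by rw [hf p, hp]⟩
  · -- affine
    intro i
    set P := Function.surjInv h₁s i with hP
    have h1 : σ₁ (P.1 + a, P.2 - b) = i + (a * N - b * K) := by
      rw [show (P.1 + a, P.2 - b) = (P.1 + a, P.2 - b) from rfl]
      have := h₁A P.1 P.2
      rw [Prod.mk.eta] at this
      rw [this, hfval]
    have h2 : σ₂ (P.1 + a, P.2 - b) = σ₂ P + (a * N - b * K) := by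
      have := h₂A P.1 P.2
      rwa [Prod.mk.eta] at this
    calc f (i + (a * N - b * K)) = f (σ₁ (P.1 + a, P.2 - b)) := by rw [h1]
      _ = σ₂ (P.1 + a, P.2 - b) := hf _
      _ = σ₂ P + (a * N - b * K) := h2
      _ = f i + (a * N - b * K) := rfl
  · -- σ₂ = f ∘ σ₁
    intro x y
    exact (hf (x, y)).symm
  · -- uniqueness
    rintro g ⟨-, -, hg⟩
    funext i
    have := hg (Function.surjInv h₁s i).1 (Function.surjInv h₁s i).2
    rw [Prod.mk.eta, hfval] at this
    exact this.symm
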